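/- Define f(s,t,α) = s − s·(cos α − (t/s)·sin α)² for s > 0, t ≥ 0, α ≥ 0, and α*(s,t) = arctan(s/t) for t > 0 and α*(s,t) = π/2 for t = 0 (so that cot α*(s,t) = t/s). Define g : ℝ_{>0} × ℝ_{≥0} × ℝ_{≥0} → ℝ_{≥0} by g(s,t,α) = f(s,t,α) if α < α*(s,t) and g(s,t,α) = s otherwise. Then g is continuous, and g is monotonically non-decreasing in each of its three variables (with the other two variables held fixed). -/

import Mathlib

open Real

/-- `f(s,t,α) = s − s(cos α − (t/s) sin α)²`. -/
noncomputable def fAux (s t α : ℝ) : ℝ :=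
  s - s * (Real.cos α - t / s * Real.sin α) ^ 2

/-- The critical angle `α*(s,t)` with `cot α*(s,t) = t/s`, i.e. `arctan(s/t)` for `t > 0`
and `π/2` for `t = 0`. -/
noncomputable def alphaStar (s t : ℝ) : ℝ :=
  if t = 0 then Real.pi / 2 else Real.arctan (s / t)

/-- `g(s,t,α) = f(s,t,α)` for `α < α*(s,t)` and `g(s,t,α) = s` otherwise. -/
noncomputable def gAux (s t α : ℝ) : ℝ :=
  if α < alphaStar s t then fAux s t α else s

lemma alphaStar_le_pi_div_two (s t : ℝ) : alphaStar s t ≤ π / 2 := by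
  unfold alphaStar
  split
  · exact le_rfl
  · exact (Real.arctan_lt_pi_div_two _).le

lemma alphaStar_pos {s t : ℝ} (hs : 0 < s) (ht : 0 ≤ t) : 0 < alphaStar s t := by
  unfold alphaStar
  split_ifs with h
  · positivity
  · have : Real.arctan 0 < Real.arctan (s / t) :=
      Real.arctan_strictMono (div_pos hs (lt_of_le_of_ne ht (Ne.symm h)))
    simpa using this

lemma alphaStar_eq {s t : ℝ} (hs : 0 < s) (ht : 0 ≤ t) :
    alphaStar s t = π / 2 - Real.arctan (t / s) := by
  unfold alphaStar
  split_ifs with h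
  · simp [h]
  · have ht' : 0 < t := lt_of_le_of_ne ht (Ne.symm h)
    have : s / t = (t / s)⁻¹ := by
      field_simp
    rw [this, Real.arctan_inv_of_pos (div_pos ht' hs)]

lemma u_nonneg {s t α : ℝ} (hs : 0 < s) (ht : 0 ≤ t) (hα : 0 ≤ α)
    (h : α < alphaStar s t) : 0 ≤ s * Real.cos α - t * Real.sin α := by
  have hα2 : α < π / 2 := lt_of_lt_of_le h (alphaStar_le_pi_div_two s t)
  have hcos : 0 < Real.cos α := Real.cos_pos_of_mem_Ioo ⟨by linarith [Real.pi_pos], hα2⟩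
  rcases eq_or_lt_of_le ht with hteq | ht'
  · have hsin : 0 ≤ Real.sin α := Real.sin_nonneg_of_nonneg_of_le_pi hα
      (by linarith [Real.pi_pos])
    nlinarith
  · have harc : α < Real.arctan (s / t) := by
      unfold alphaStar at h
      rwa [if_neg (ne_of_gt ht')] at h
    have htan : Real.tan α < s / t := by
      have := Real.strictMonoOn_tan (a := α) (b := Real.arctan (s / t))
        ⟨by linarith [Real.pi_pos], hα2⟩
        ⟨Real.neg_pi_div_two_lt_arctan _, Real.arctan_lt_pi_div_two _⟩ harc
      rwa [Real.tan_arctan] at this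
    have := Real.tan_eq_sin_div_cos α
    rw [this, div_lt_div_iff₀ hcos ht'] at htan
    linarith

lemma fAux_eq {s t α : ℝ} (hs : s ≠ 0) :
    fAux s t α = s - (s * Real.cos α - t * Real.sin α) ^ 2 / s := by
  unfold fAux
  field_simp

lemma fAux_eq' {s t α : ℝ} (hs : s ≠ 0) :
    fAux s t α = s * Real.sin α ^ 2 + 2 * t * Real.sin α * Real.cos α
      - t ^ 2 * Real.sin α ^ 2 / s := by
  have hp := Real.sin_sq_add_cos_sq α
  unfold fAux
  field_simp
  linear_combination (-(s ^ 2)) * hp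

lemma fAux_le {s t α : ℝ} (hs : 0 < s) : fAux s t α ≤ s := by
  unfold fAux
  nlinarith [sq_nonneg (Real.cos α - t / s * Real.sin α)]

lemma fAux_mono_s {s₁ s₂ t α : ℝ} (hs₁ : 0 < s₁) (h : s₁ ≤ s₂) :
    fAux s₁ t α ≤ fAux s₂ t α := by
  have hs₂ : 0 < s₂ := lt_of_lt_of_le hs₁ h
  rw [fAux_eq' hs₁.ne', fAux_eq' hs₂.ne']
  have h1 : s₁ * Real.sin α ^ 2 ≤ s₂ * Real.sin α ^ 2 :=
    mul_le_mul_of_nonneg_right h (sq_nonneg _)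
  have h2 : t ^ 2 * Real.sin α ^ 2 / s₂ ≤ t ^ 2 * Real.sin α ^ 2 / s₁ := by
    gcongr
  linarith

lemma gAux_le {s t α : ℝ} (hs : 0 < s) : gAux s t α ≤ s := by
  unfold gAux
  split
  · exact fAux_le hs
  · exact le_rfl

/-- Lemma `lem:gfun`: the function `g` is nonnegative, continuous on
`ℝ_{>0} × ℝ_{≥0} × ℝ_{≥0}`, and monotonically non-decreasing in each of its variables. -/
theorem gAux_continuous_and_monotone :
    ContinuousOn (fun q : ℝ × ℝ × ℝ => gAux q.1 q.2.1 q.2.2)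
      {q : ℝ × ℝ × ℝ | 0 < q.1 ∧ 0 ≤ q.2.1 ∧ 0 ≤ q.2.2} ∧
    (∀ s t α : ℝ, 0 < s → 0 ≤ t → 0 ≤ α → 0 ≤ gAux s t α) ∧
    (∀ s₁ s₂ t α : ℝ, 0 < s₁ → s₁ ≤ s₂ → 0 ≤ t → 0 ≤ α →
      gAux s₁ t α ≤ gAux s₂ t α) ∧
    (∀ s t₁ t₂ α : ℝ, 0 < s → 0 ≤ t₁ → t₁ ≤ t₂ → 0 ≤ α →
      gAux s t₁ α ≤ gAux s t₂ α) ∧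
    (∀ s t α₁ α₂ : ℝ, 0 < s → 0 ≤ t → 0 ≤ α₁ → α₁ ≤ α₂ →
      gAux s t α₁ ≤ gAux s t α₂) := by
  refine ⟨?_, ?_, ?_, ?_, ?_⟩
  · -- continuity
    set S : Set (ℝ × ℝ × ℝ) := {q : ℝ × ℝ × ℝ | 0 < q.1 ∧ 0 ≤ q.2.1 ∧ 0 ≤ q.2.2}
    set F : ℝ × ℝ × ℝ → ℝ := fun q =>
      q.1 - (q.1 * Real.cos (min q.2.2 (π / 2 - Real.arctan (q.2.1 / q.1)))
        - q.2.1 * Real.sin (min q.2.2 (π / 2 - Real.arctan (q.2.1 / q.1)))) ^ 2 / q.1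
      with hF
    have hne : ∀ q ∈ S, q.1 ≠ 0 := fun q hq => hq.1.ne'
    have hs1 : ContinuousOn (fun q : ℝ × ℝ × ℝ => q.1) S := continuous_fst.continuousOn
    have ht1 : ContinuousOn (fun q : ℝ × ℝ × ℝ => q.2.1) S :=
      (continuous_fst.comp continuous_snd).continuousOn
    have ha1 : ContinuousOn (fun q : ℝ × ℝ × ℝ => q.2.2) S :=
      (continuous_snd.comp continuous_snd).continuousOn
    have hm : ContinuousOn
        (fun q : ℝ × ℝ × ℝ => min q.2.2 (π / 2 - Real.arctan (q.2.1 / q.1))) S :=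
      ha1.inf (continuousOn_const.sub
        (Real.continuous_arctan.comp_continuousOn (ht1.div hs1 hne)))
    have hFc : ContinuousOn F S := by
      exact hs1.sub ((((hs1.mul (Real.continuous_cos.comp_continuousOn hm)).sub
        (ht1.mul (Real.continuous_sin.comp_continuousOn hm))).pow 2).div hs1 hne)
    refine hFc.congr ?_
    rintro ⟨s, t, α⟩ ⟨hs, ht, hα⟩
    simp only [hF]
    have hstar : alphaStar s t = π / 2 - Real.arctan (t / s) := alphaStar_eq hs ht
    by_cases hlt : α < alphaStar s t
    · rw [gAux, if_pos hlt, min_eq_left (by rw [← hstar]; exact hlt.le)]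
      exact fAux_eq hs.ne'
    · rw [gAux, if_neg hlt, min_eq_right (by rw [← hstar]; exact not_lt.mp hlt)]
      have h0 : s * Real.cos (π / 2 - Real.arctan (t / s))
          - t * Real.sin (π / 2 - Real.arctan (t / s)) = 0 := by
        rw [Real.cos_pi_div_two_sub, Real.sin_pi_div_two_sub,
          Real.sin_arctan, Real.cos_arctan]
        field_simp
        ring
      rw [h0]
      simp
  · -- nonnegativity
    intro s t α hs ht hα
    unfold gAux
    split_ifs with h
    · have hu := u_nonneg hs ht hα h
      have hα2 : α < π / 2 := lt_of_lt_of_le h (alphaStar_le_pi_div_two s t)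
      have hsin : 0 ≤ Real.sin α := Real.sin_nonneg_of_nonneg_of_le_pi hα
        (by linarith [Real.pi_pos])
      have hus : s * Real.cos α - t * Real.sin α ≤ s := by
        nlinarith [Real.cos_le_one α, mul_nonneg ht hsin]
      rw [fAux_eq hs.ne', sub_nonneg, div_le_iff₀ hs]
      nlinarith [hu, hus]
    · exact hs.le
  · -- monotone in s
    intro s₁ s₂ t α hs₁ hs ht hα
    have hs₂ : 0 < s₂ := lt_of_lt_of_le hs₁ hs
    have hstar : alphaStar s₁ t ≤ alphaStar s₂ t := by
      rcases eq_or_lt_of_le ht with h | h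
      · simp [alphaStar, ← h]
      · unfold alphaStar
        rw [if_neg h.ne', if_neg h.ne']
        exact Real.arctan_strictMono.monotone (by gcongr)
    by_cases h1 : α < alphaStar s₁ t
    · rw [gAux, if_pos h1, gAux, if_pos (lt_of_lt_of_le h1 hstar)]
      exact fAux_mono_s hs₁ hs
    · by_cases h2 : α < alphaStar s₂ t
      · rw [gAux, if_neg h1, gAux, if_pos h2]
        -- middle case: t > 0 necessarily
        rcases eq_or_lt_of_le ht with hteq | ht'
        · exfalso
          apply h1
          rw [← hteq] at h2 ⊢
          unfold alphaStar at h2 ⊢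
          simpa using h2
        · have hα2 : α < π / 2 := lt_of_lt_of_le h2 (alphaStar_le_pi_div_two s₂ t)
          have hαpos : 0 < α := lt_of_lt_of_le (alphaStar_pos hs₁ ht) (not_lt.mp h1)
          have htanpos : 0 < Real.tan α := Real.tan_pos_of_pos_of_lt_pi_div_two hαpos hα2
          have hmem : α ∈ Set.Ioo (-(π / 2)) (π / 2) :=
            ⟨by linarith [Real.pi_pos], hα2⟩
          have h1' : s₁ / t ≤ Real.tan α := by
            have harc : Real.arctan (s₁ / t) ≤ α := by
              have := not_lt.mp h1
              unfold alphaStar at this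
              rwa [if_neg (ne_of_gt ht')] at this
            have := Real.strictMonoOn_tan.monotoneOn
              (Set.mem_Ioo.mpr ⟨Real.neg_pi_div_two_lt_arctan _,
                Real.arctan_lt_pi_div_two _⟩) hmem harc
            rwa [Real.tan_arctan] at this
          have h2' : Real.tan α < s₂ / t := by
            have harc : α < Real.arctan (s₂ / t) := by
              unfold alphaStar at h2
              rwa [if_neg (ne_of_gt ht')] at h2
            have := Real.strictMonoOn_tan hmem
              (Set.mem_Ioo.mpr ⟨Real.neg_pi_div_two_lt_arctan _,
                Real.arctan_lt_pi_div_two _⟩) harc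
            rwa [Real.tan_arctan] at this
          set s' : ℝ := t * Real.tan α with hs'def
          have hs' : 0 < s' := mul_pos ht' htanpos
          have hkey : fAux s' t α = s' := by
            have hcos : Real.cos α ≠ 0 := by
              have : 0 < Real.cos α := Real.cos_pos_of_mem_Ioo hmem
              exact this.ne'
            unfold fAux
            rw [hs'def, Real.tan_eq_sin_div_cos]
            have hsin : Real.sin α ≠ 0 := by
              have : 0 < Real.sin α := Real.sin_pos_of_pos_of_lt_pi hαpos
                (by linarith [Real.pi_pos])
              exact this.ne'
            field_simp
            ring
          have hs'le : s' ≤ s₂ := by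
            rw [hs'def]
            calc t * Real.tan α ≤ t * (s₂ / t) := by
                  exact mul_le_mul_of_nonneg_left h2'.le ht'.le
              _ = s₂ := by field_simp
          calc s₁ = t * (s₁ / t) := by field_simp
            _ ≤ t * Real.tan α := mul_le_mul_of_nonneg_left h1' ht'.le
            _ = fAux s' t α := hkey.symm
            _ ≤ fAux s₂ t α := fAux_mono_s hs' hs'le
      · rw [gAux, if_neg h1, gAux, if_neg h2]
        exact hs
  · -- monotone in t
    intro s t₁ t₂ α hs ht₁ ht hα
    have ht₂ : 0 ≤ t₂ := le_trans ht₁ ht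
    have hstar : alphaStar s t₂ ≤ alphaStar s t₁ := by
      rcases eq_or_lt_of_le ht₁ with h1 | h1
      · refine le_trans (alphaStar_le_pi_div_two s t₂) ?_
        simp [alphaStar, ← h1]
      · have ht₂' : 0 < t₂ := lt_of_lt_of_le h1 ht
        unfold alphaStar
        rw [if_neg ht₂'.ne', if_neg h1.ne']
        exact Real.arctan_strictMono.monotone (by gcongr)
    by_cases h2 : α < alphaStar s t₂
    · have h1 : α < alphaStar s t₁ := lt_of_lt_of_le h2 hstar
      rw [gAux, if_pos h1, gAux, if_pos h2]
      rw [fAux_eq hs.ne', fAux_eq hs.ne']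
      have hu2 := u_nonneg hs ht₂ hα h2
      have hα2 : α < π / 2 := lt_of_lt_of_le h2 (alphaStar_le_pi_div_two s t₂)
      have hsin : 0 ≤ Real.sin α := Real.sin_nonneg_of_nonneg_of_le_pi hα
        (by linarith [Real.pi_pos])
      have hle : s * Real.cos α - t₂ * Real.sin α ≤ s * Real.cos α - t₁ * Real.sin α := by
        nlinarith
      have hsq : (s * Real.cos α - t₂ * Real.sin α) ^ 2
          ≤ (s * Real.cos α - t₁ * Real.sin α) ^ 2 := by
        nlinarith
      gcongr
    · by_cases h1 : α < alphaStar s t₁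
      · rw [gAux, if_pos h1, gAux, if_neg h2]
        exact fAux_le hs
      · rw [gAux, if_neg h1, gAux, if_neg h2]
  · -- monotone in α
    intro s t α₁ α₂ hs ht hα₁ hα
    by_cases h2 : α₂ < alphaStar s t
    · have h1 : α₁ < alphaStar s t := lt_of_le_of_lt hα h2
      rw [gAux, if_pos h1, gAux, if_pos h2]
      rw [fAux_eq hs.ne', fAux_eq hs.ne']
      have hu2 := u_nonneg hs ht (le_trans hα₁ hα) h2
      have hα2 : α₂ < π / 2 := lt_of_lt_of_le h2 (alphaStar_le_pi_div_two s t)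
      have hcos : Real.cos α₂ ≤ Real.cos α₁ :=
        Real.cos_le_cos_of_nonneg_of_le_pi hα₁ (by linarith [Real.pi_pos]) hα
      have hsin : Real.sin α₁ ≤ Real.sin α₂ :=
        Real.sin_le_sin_of_le_of_le_pi_div_two (by linarith [Real.pi_pos]) hα2.le hα
      have hle : s * Real.cos α₂ - t * Real.sin α₂
          ≤ s * Real.cos α₁ - t * Real.sin α₁ := by nlinarith
      have hsq : (s * Real.cos α₂ - t * Real.sin α₂) ^ 2
          ≤ (s * Real.cos α₁ - t * Real.sin α₁) ^ 2 := by nlinarith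
      gcongr
    · have he : gAux s t α₂ = s := if_neg h2
      rw [he]
      exact gAux_le hs
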